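/- Fix b_E^E, b_I^E, b_E^I, b_I^I > 0, τ_I > 0, a_E, a_I > 0, ν_{E,ext} ≥ 0 and V_R < V_F. Then there exists T > 0 such that for every excitatory refractory period τ_E > T, the steady-state system N_E(τ_E + I_1(N_E,N_I)) = 1, N_I(τ_I + I_2(N_E,N_I)) = 1 (with 0 < N_E < 1/τ_E, 0 < N_I < 1/τ_I) has exactly one solution; i.e., if τ_E is large enough in comparison with the other parameters, the steady state is unique. -/

import Mathlib

/-- K(w_R, w_F) := ∫_0^∞ (e^{-s²/2}/s)(e^{s·w_F} − e^{s·w_R}) ds (Lebesgue integral on (0,∞)). -/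
noncomputable def K (wR wF : ℝ) : ℝ :=
  ∫ s in Set.Ioi (0 : ℝ), Real.exp (-s ^ 2 / 2) / s * (Real.exp (s * wF) - Real.exp (s * wR))

/-- I₁(N_E,N_I) with V_0^E(N_E,N_I) := b_E^E N_E − b_I^E N_I + (b_E^E − b_E^E) ν_{E,ext}. -/
noncomputable def I1 (VR VF bEE bIE aE ν NE NI : ℝ) : ℝ :=
  K ((VR - (bEE * NE - bIE * NI + (bEE - bEE) * ν)) / Real.sqrt aE)
    ((VF - (bEE * NE - bIE * NI + (bEE - bEE) * ν)) / Real.sqrt aE)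

/-- I₂(N_E,N_I) with V_0^I(N_E,N_I) := b_E^I N_E − b_I^I N_I + (b_E^I − b_E^E) ν_{E,ext}. -/
noncomputable def I2 (VR VF bEE bEI bII aI ν NE NI : ℝ) : ℝ :=
  K ((VR - (bEI * NE - bII * NI + (bEI - bEE) * ν)) / Real.sqrt aI)
    ((VF - (bEI * NE - bII * NI + (bEI - bEE) * ν)) / Real.sqrt aI)

open MeasureTheory Real Set
open scoped ENNReal

/-- the integrand -/
noncomputable def Kg (x y s : ℝ) : ℝ :=
  Real.exp (-s ^ 2 / 2) / s * (Real.exp (s * y) - Real.exp (s * x))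

lemma K_def (x y : ℝ) : K x y = ∫ s in Set.Ioi (0:ℝ), Kg x y s := rfl

lemma exp_sub_exp_le {a b : ℝ} (h : a ≤ b) : Real.exp b - Real.exp a ≤ Real.exp b * (b - a) := by
  have h1 : (a - b) + 1 ≤ Real.exp (a - b) := Real.add_one_le_exp _
  have h2 : Real.exp (a - b) * Real.exp b = Real.exp a := by
    rw [← Real.exp_add]; ring_nf
  nlinarith [Real.exp_pos b]

lemma Kg_abs_le {x y M : ℝ} (hx : x ≤ M) (hy : y ≤ M) {s : ℝ} (hs : 0 < s) :
    |Kg x y s| ≤ Real.exp (-s ^ 2 / 2 + s * M) * |y - x| := by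
  have key : ∀ a b : ℝ, a ≤ b → a ≤ M → b ≤ M →
      Real.exp (s * b) - Real.exp (s * a) ≤ s * Real.exp (s * M) * (b - a) := by
    intro a b hab haM hbM
    have h1 : Real.exp (s * b) - Real.exp (s * a) ≤ Real.exp (s * b) * (s * b - s * a) :=
      exp_sub_exp_le (by nlinarith)
    have h2 : Real.exp (s * b) ≤ Real.exp (s * M) := Real.exp_le_exp.2 (by nlinarith)
    nlinarith [mul_le_mul_of_nonneg_right h2 (mul_nonneg hs.le (sub_nonneg.2 hab)),
      Real.exp_pos (s * b)]
  have habs : |Real.exp (s * y) - Real.exp (s * x)| ≤ s * Real.exp (s * M) * |y - x| := by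
    rcases le_total x y with h | h
    · rw [abs_of_nonneg (by simp [Real.exp_le_exp]; nlinarith), abs_of_nonneg (by linarith)]
      exact key x y h hx hy
    · rw [abs_of_nonpos (by simp [Real.exp_le_exp]; nlinarith), abs_of_nonpos (by linarith)]
      have := key y x h hy hx
      linarith
  have hpos : 0 < Real.exp (-s ^ 2 / 2) / s := div_pos (Real.exp_pos _) hs
  calc |Kg x y s| = Real.exp (-s ^ 2 / 2) / s * |Real.exp (s * y) - Real.exp (s * x)| := by
        rw [Kg, abs_mul, abs_of_pos hpos]
    _ ≤ Real.exp (-s ^ 2 / 2) / s * (s * Real.exp (s * M) * |y - x|) := by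
        exact mul_le_mul_of_nonneg_left habs hpos.le
    _ = Real.exp (-s ^ 2 / 2) * Real.exp (s * M) * |y - x| := by
        field_simp
    _ = Real.exp (-s ^ 2 / 2 + s * M) * |y - x| := by rw [Real.exp_add]

lemma integrable_gauss_shift (M : ℝ) :
    IntegrableOn (fun s => Real.exp (-s ^ 2 / 2 + s * M)) (Ioi 0) := by
  have h0 : Integrable (fun s : ℝ => Real.exp (-(1/2) * (s - M) ^ 2)) :=
    (integrable_exp_neg_mul_sq (by norm_num : (0:ℝ) < 1/2)).comp_sub_right M
  have h1 : Integrable (fun s : ℝ => Real.exp (M ^ 2 / 2) * Real.exp (-(1/2) * (s - M) ^ 2)) :=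
    h0.const_mul _
  have h2 : (fun s : ℝ => Real.exp (-s ^ 2 / 2 + s * M))
      = fun s : ℝ => Real.exp (M ^ 2 / 2) * Real.exp (-(1/2) * (s - M) ^ 2) := by
    funext s; rw [← Real.exp_add]; ring_nf
  rw [h2]
  exact h1.integrableOn

lemma Kg_contOn (x y : ℝ) : ContinuousOn (Kg x y) (Ioi 0) := by
  apply ContinuousOn.mul
  · exact ContinuousOn.div (by fun_prop) continuousOn_id (fun s hs => ne_of_gt hs)
  · fun_prop

lemma Kg_integrableOn (x y : ℝ) : IntegrableOn (Kg x y) (Ioi 0) := by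
  set M := max x y with hM
  have hx : x ≤ M := le_max_left _ _
  have hy : y ≤ M := le_max_right _ _
  refine Integrable.mono' (((integrable_gauss_shift M).mul_const |y - x|)) ?_ ?_
  · exact (Kg_contOn x y).aestronglyMeasurable measurableSet_Ioi
  · filter_upwards [ae_restrict_mem measurableSet_Ioi] with s hs
    simpa [norm_eq_abs] using Kg_abs_le hx hy (mem_Ioi.mp hs)

noncomputable def LL (M : ℝ) : ℝ := ∫ s in Ioi (0:ℝ), Real.exp (-s ^ 2 / 2 + s * M)

lemma LL_nonneg (M : ℝ) : 0 ≤ LL M :=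
  setIntegral_nonneg measurableSet_Ioi (fun s _ => (Real.exp_pos _).le)

lemma K_cocycle (x y z : ℝ) : K x z = K x y + K y z := by
  rw [K_def, K_def, K_def, ← integral_add (Kg_integrableOn x y) (Kg_integrableOn y z)]
  apply setIntegral_congr_fun measurableSet_Ioi
  intro s _
  simp only [Kg]
  ring

lemma K_self (x : ℝ) : K x x = 0 := by
  rw [K_def]
  simp [Kg]

lemma K_symm (x y : ℝ) : K y x = -K x y := by
  have := K_cocycle x y x
  rw [K_self] at this
  linarith

lemma K_abs_le {x y M : ℝ} (hx : x ≤ M) (hy : y ≤ M) : |K x y| ≤ LL M * |y - x| := by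
  rw [K_def]
  calc |∫ s in Ioi (0:ℝ), Kg x y s| ≤ ∫ s in Ioi (0:ℝ), |Kg x y s| := by
        simpa [norm_eq_abs] using
          norm_integral_le_integral_norm (μ := volume.restrict (Ioi 0)) (Kg x y)
    _ ≤ ∫ s in Ioi (0:ℝ), Real.exp (-s ^ 2 / 2 + s * M) * |y - x| := by
        apply setIntegral_mono_on (Kg_integrableOn x y).abs
          ((integrable_gauss_shift M).mul_const _) measurableSet_Ioi
        intro s hs
        exact Kg_abs_le hx hy (mem_Ioi.mp hs)
    _ = LL M * |y - x| := by rw [integral_mul_const]; rfl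

lemma K_diff (a b a' b' : ℝ) : K a b - K a' b' = K a a' - K b b' := by
  have h1 := K_cocycle a a' b
  have h2 := K_cocycle a' b b'
  linarith

lemma K_nonneg {x y : ℝ} (h : x ≤ y) : 0 ≤ K x y := by
  rw [K_def]
  apply setIntegral_nonneg measurableSet_Ioi
  intro s hs
  have hs : 0 < s := mem_Ioi.mp hs
  apply mul_nonneg (div_nonneg (Real.exp_pos _).le hs.le)
  simp only [sub_nonneg, Real.exp_le_exp]
  nlinarith

lemma K_pos {x y : ℝ} (h : x < y) : 0 < K x y := by
  rw [K_def]
  have hnn : (0:ℝ → ℝ) ≤ᵐ[volume.restrict (Ioi 0)] Kg x y := by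
    filter_upwards [ae_restrict_mem measurableSet_Ioi] with s hs
    have hs : 0 < s := mem_Ioi.mp hs
    show (0:ℝ) ≤ Kg x y s
    apply mul_nonneg (div_nonneg (Real.exp_pos _).le hs.le)
    simp only [sub_nonneg, Real.exp_le_exp]
    nlinarith
  rw [setIntegral_pos_iff_support_of_nonneg_ae hnn (Kg_integrableOn x y)]
  have hsub : Ioi (0:ℝ) ⊆ Function.support (Kg x y) := by
    intro s hs
    have hs : 0 < s := mem_Ioi.mp hs
    have : 0 < Kg x y s := by
      apply mul_pos (div_pos (Real.exp_pos _) hs)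
      simp only [sub_pos, Real.exp_lt_exp]
      nlinarith
    exact ne_of_gt this
  calc (0:ℝ≥0∞) < ⊤ := by simp
    _ = volume (Ioi (0:ℝ)) := (Real.volume_Ioi).symm
    _ ≤ volume (Function.support (Kg x y) ∩ Ioi 0) := by
        apply measure_mono
        exact subset_inter hsub (subset_refl _)

lemma K_shift_pair {x y δ : ℝ} (hxy : x ≤ y) (hδ : 0 ≤ δ) : K x (x + δ) ≤ K y (y + δ) := by
  rw [K_def, K_def]
  apply setIntegral_mono_on (Kg_integrableOn _ _) (Kg_integrableOn _ _) measurableSet_Ioi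
  intro s hs
  have hs : 0 < s := mem_Ioi.mp hs
  simp only [Kg]
  apply mul_le_mul_of_nonneg_left _ (div_nonneg (Real.exp_pos _).le hs.le)
  have e1 : Real.exp (s * (x + δ)) - Real.exp (s * x) = Real.exp (s * x) * (Real.exp (s * δ) - 1) := by
    rw [mul_add, Real.exp_add]; ring
  have e2 : Real.exp (s * (y + δ)) - Real.exp (s * y) = Real.exp (s * y) * (Real.exp (s * δ) - 1) := by
    rw [mul_add, Real.exp_add]; ring
  rw [e1, e2]
  apply mul_le_mul_of_nonneg_right (Real.exp_le_exp.2 (by nlinarith))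
  simp only [sub_nonneg]
  rw [show (1:ℝ) = Real.exp 0 by simp]
  exact Real.exp_le_exp.2 (by nlinarith)

lemma K_shift {x y δ : ℝ} (hxy : x ≤ y) (hδ : 0 ≤ δ) : K x y ≤ K (x + δ) (y + δ) := by
  have h := K_diff (x + δ) (y + δ) x y
  have h2 : K (x+δ) x = - K x (x+δ) := K_symm _ _
  have h3 : K (y+δ) y = - K y (y+δ) := K_symm _ _
  have := K_shift_pair hxy hδ
  linarith

noncomputable def Kv (c d v : ℝ) : ℝ := K (c - v) (d - v)

lemma Kv_pos {c d : ℝ} (h : c < d) (v : ℝ) : 0 < Kv c d v := K_pos (show c - v < d - v by linarith)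

lemma Kv_anti {c d v v' : ℝ} (h : c ≤ d) (hv : v ≤ v') : Kv c d v' ≤ Kv c d v := by
  have h2 := K_shift (x := c - v') (y := d - v') (δ := v' - v) (by linarith) (by linarith)
  have e1 : c - v' + (v' - v) = c - v := by ring
  have e2 : d - v' + (v' - v) = d - v := by ring
  rw [e1, e2] at h2
  exact h2

lemma Kv_lip {c d v v' M : ℝ} (h1 : c - v ≤ M) (h2 : d - v ≤ M) (h3 : c - v' ≤ M)
    (h4 : d - v' ≤ M) : |Kv c d v - Kv c d v'| ≤ LL M * (2 * |v - v'|) := by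
  have hd : Kv c d v - Kv c d v' = K (c - v) (c - v') - K (d - v) (d - v') :=
    K_diff (c - v) (d - v) (c - v') (d - v')
  have b1 := K_abs_le h1 h3
  have b2 := K_abs_le h2 h4
  have e1 : c - v' - (c - v) = v - v' := by ring
  have e2 : d - v' - (d - v) = v - v' := by ring
  rw [e1] at b1; rw [e2] at b2
  calc |Kv c d v - Kv c d v'| = |K (c - v) (c - v') - K (d - v) (d - v')| := by rw [hd]
    _ ≤ |K (c - v) (c - v')| + |K (d - v) (d - v')| := abs_sub _ _
    _ ≤ LL M * |v - v'| + LL M * |v - v'| := add_le_add b1 b2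
    _ = LL M * (2 * |v - v'|) := by ring

lemma I1_eq (VR VF bEE bIE aE ν x t : ℝ) :
    I1 VR VF bEE bIE aE ν x t = Kv (VR / Real.sqrt aE) (VF / Real.sqrt aE)
      ((bEE * x - bIE * t + (bEE - bEE) * ν) / Real.sqrt aE) := by
  simp only [I1, Kv, sub_div]

lemma I2_eq (VR VF bEE bEI bII aI ν x t : ℝ) :
    I2 VR VF bEE bEI bII aI ν x t = Kv (VR / Real.sqrt aI) (VF / Real.sqrt aI)
      ((bEI * x - bII * t + (bEI - bEE) * ν) / Real.sqrt aI) := by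
  simp only [I2, Kv, sub_div]

set_option maxHeartbeats 1000000 in
theorem abstract_unique (τI c1 d1 c2 d2 : ℝ) (g1 g2 : ℝ → ℝ → ℝ)
    (hτI : 0 < τI) (hc1 : 0 ≤ c1) (hd1 : 0 ≤ d1) (hc2 : 0 ≤ c2) (hd2 : 0 ≤ d2)
    (pos1 : ∀ x t, 0 < g1 x t) (pos2 : ∀ x t, 0 < g2 x t)
    (mono2 : ∀ x s t, s ≤ t → g2 x s ≤ g2 x t)
    (lip1 : ∀ x ∈ Icc (0:ℝ) 1, ∀ x' ∈ Icc (0:ℝ) 1, ∀ t ∈ Icc (0:ℝ) (1/τI),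
      ∀ t' ∈ Icc (0:ℝ) (1/τI), |g1 x t - g1 x' t'| ≤ c1 * |x - x'| + d1 * |t - t'|)
    (lip2 : ∀ x ∈ Icc (0:ℝ) 1, ∀ x' ∈ Icc (0:ℝ) 1, ∀ t ∈ Icc (0:ℝ) (1/τI),
      ∀ t' ∈ Icc (0:ℝ) (1/τI), |g2 x t - g2 x' t'| ≤ c2 * |x - x'| + d2 * |t - t'|) :
    ∃ T > 0, ∀ τE : ℝ, T < τE →
      ∃! p : ℝ × ℝ, p.1 ∈ Set.Ioo 0 (1 / τE) ∧ p.2 ∈ Set.Ioo 0 (1 / τI) ∧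
        p.1 * (τE + g1 p.1 p.2) = 1 ∧ p.2 * (τI + g2 p.1 p.2) = 1 := by
  have hτI' : (0:ℝ) < 1 / τI := by positivity
  set Cφ := c2 / τI ^ 2 with hCφdef
  have hCφ : 0 ≤ Cφ := by positivity
  set A := c1 + d1 * Cφ with hAdef
  have hA : 0 ≤ A := by positivity
  -- quantitative monotonicity of t ↦ t (τI + g2 x t)
  have hmono : ∀ x s t : ℝ, 0 ≤ s → s ≤ t →
      τI * (t - s) ≤ t * (τI + g2 x t) - s * (τI + g2 x s) := by
    intro x s t hs hst
    have h1 := mono2 x s t hst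
    nlinarith [mul_nonneg (sub_nonneg.2 hst) (pos2 x t).le,
      mul_nonneg hs (sub_nonneg.2 h1)]
  have habs : ∀ x s t : ℝ, 0 ≤ s → 0 ≤ t →
      τI * |s - t| ≤ |s * (τI + g2 x s) - t * (τI + g2 x t)| := by
    intro x s t hs ht
    rcases le_total s t with h | h
    · have h2 := hmono x s t hs h
      rw [abs_of_nonpos (by linarith : s - t ≤ 0)]
      calc τI * -(s - t) = τI * (t - s) := by ring
        _ ≤ t * (τI + g2 x t) - s * (τI + g2 x s) := h2
        _ = -(s * (τI + g2 x s) - t * (τI + g2 x t)) := by ring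
        _ ≤ |s * (τI + g2 x s) - t * (τI + g2 x t)| := neg_le_abs _
    · have h2 := hmono x t s ht h
      rw [abs_of_nonneg (by linarith : 0 ≤ s - t)]
      calc τI * (s - t) ≤ s * (τI + g2 x s) - t * (τI + g2 x t) := by linarith
        _ ≤ |s * (τI + g2 x s) - t * (τI + g2 x t)| := le_abs_self _
  -- existence of a root in t for each x
  have hroot : ∀ x ∈ Icc (0:ℝ) 1, ∃ t, t ∈ Icc (0:ℝ) (1/τI) ∧ t * (τI + g2 x t) = 1 := by
    intro x hx
    have hc : ContinuousOn (fun t => t * (τI + g2 x t)) (Icc 0 (1/τI)) := by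
      have hl : LipschitzOnWith (Real.toNNReal d2) (fun t => g2 x t) (Icc 0 (1/τI)) := by
        apply LipschitzOnWith.of_dist_le'
        intro t ht t' ht'
        rw [Real.dist_eq, Real.dist_eq]
        have h3 := lip2 x hx x hx t ht t' ht'
        simpa using h3
      exact ContinuousOn.mul continuousOn_id (continuousOn_const.add hl.continuousOn)
    have hub : (1:ℝ) ≤ (1/τI) * (τI + g2 x (1/τI)) := by
      have h1 : (1/τI) * τI = 1 := by field_simp
      nlinarith [mul_pos hτI' (pos2 x (1/τI))]
    have h1mem : (1:ℝ) ∈ Icc ((fun t => t * (τI + g2 x t)) 0) ((fun t => t * (τI + g2 x t)) (1/τI)) := by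
      constructor
      · show (0:ℝ) * (τI + g2 x 0) ≤ 1
        simp
      · exact hub
    obtain ⟨t, htmem, hteq⟩ := intermediate_value_Icc hτI'.le hc h1mem
    exact ⟨t, htmem, hteq⟩
  -- roots are interior
  have hIoo2 : ∀ x t : ℝ, 0 ≤ t → t * (τI + g2 x t) = 1 → t ∈ Ioo (0:ℝ) (1/τI) := by
    intro x t ht heq
    have hp := pos2 x t
    have ht0 : 0 < t := by nlinarith
    refine ⟨ht0, ?_⟩
    rw [lt_div_iff₀ hτI]
    nlinarith [mul_pos ht0 hp]
  -- Lipschitz dependence of roots on x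
  have hrootlip : ∀ x ∈ Icc (0:ℝ) 1, ∀ x' ∈ Icc (0:ℝ) 1, ∀ s t : ℝ,
      s ∈ Icc (0:ℝ) (1/τI) → t ∈ Icc (0:ℝ) (1/τI) →
      s * (τI + g2 x s) = 1 → t * (τI + g2 x' t) = 1 → |s - t| ≤ Cφ * |x - x'| := by
    intro x hx x' hx' s t hs ht h1 h2
    have ha := habs x s t hs.1 ht.1
    have key : s * (τI + g2 x s) - t * (τI + g2 x t) = t * (g2 x' t - g2 x t) := by
      rw [h1, ← h2]; ring
    rw [key] at ha
    have h3 := lip2 x' hx' x hx t ht t ht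
    simp only [sub_self, abs_zero, mul_zero, add_zero] at h3
    have htb : |t| ≤ 1/τI := by rw [abs_of_nonneg ht.1]; exact ht.2
    have hlt : |t * (g2 x' t - g2 x t)| ≤ (1/τI) * (c2 * |x' - x|) := by
      rw [abs_mul]
      exact mul_le_mul htb h3 (abs_nonneg _) hτI'.le
    rw [abs_sub_comm x' x] at hlt
    have hfin : τI * (Cφ * |x - x'|) = (1/τI) * (c2 * |x - x'|) := by
      rw [hCφdef]; field_simp
    have hmul : τI * |s - t| ≤ τI * (Cφ * |x - x'|) := by linarith
    exact (mul_le_mul_iff_right₀ hτI).1 hmul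
  -- choose the root function
  choose! φ hφmem hφeq using hroot
  have hφIoo : ∀ x ∈ Icc (0:ℝ) 1, φ x ∈ Ioo (0:ℝ) (1/τI) :=
    fun x hx => hIoo2 x (φ x) (hφmem x hx).1 (hφeq x hx)
  have hφlip : ∀ x ∈ Icc (0:ℝ) 1, ∀ x' ∈ Icc (0:ℝ) 1, |φ x - φ x'| ≤ Cφ * |x - x'| :=
    fun x hx x' hx' => hrootlip x hx x' hx' (φ x) (φ x') (hφmem x hx) (hφmem x' hx')
      (hφeq x hx) (hφeq x' hx')
  refine ⟨1 + A, by linarith, ?_⟩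
  intro τE hτE
  have hτE1 : (1:ℝ) < τE := by linarith
  have hτEpos : (0:ℝ) < τE := by linarith
  have hτE' : (0:ℝ) < 1/τE := by positivity
  have hτEle1 : 1/τE ≤ 1 := by rw [div_le_one hτEpos]; linarith
  have hsub : Icc (0:ℝ) (1/τE) ⊆ Icc (0:ℝ) 1 := Icc_subset_Icc le_rfl hτEle1
  have hH : ∀ x ∈ Icc (0:ℝ) 1, ∀ x' ∈ Icc (0:ℝ) 1,
      |g1 x (φ x) - g1 x' (φ x')| ≤ A * |x - x'| := by
    intro x hx x' hx'
    have h1 := lip1 x hx x' hx' (φ x) (hφmem x hx) (φ x') (hφmem x' hx')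
    have h2 := hφlip x hx x' hx'
    calc |g1 x (φ x) - g1 x' (φ x')| ≤ c1 * |x - x'| + d1 * |φ x - φ x'| := h1
      _ ≤ c1 * |x - x'| + d1 * (Cφ * |x - x'|) :=
          add_le_add le_rfl (mul_le_mul_of_nonneg_left h2 hd1)
      _ = A * |x - x'| := by rw [hAdef]; ring
  have hGcont : ContinuousOn (fun x => x * (τE + g1 x (φ x))) (Icc 0 (1/τE)) := by
    have hl : LipschitzOnWith (Real.toNNReal A) (fun x => g1 x (φ x)) (Icc 0 (1/τE)) := by
      apply LipschitzOnWith.of_dist_le'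
      intro x hx x' hx'
      rw [Real.dist_eq, Real.dist_eq]
      exact hH x (hsub hx) x' (hsub hx')
    exact ContinuousOn.mul continuousOn_id (continuousOn_const.add hl.continuousOn)
  have hub : (1:ℝ) ≤ (1/τE) * (τE + g1 (1/τE) (φ (1/τE))) := by
    have h1 : (1/τE) * τE = 1 := by field_simp
    nlinarith [mul_pos hτE' (pos1 (1/τE) (φ (1/τE)))]
  have h1mem : (1:ℝ) ∈ Icc ((fun x => x * (τE + g1 x (φ x))) 0) ((fun x => x * (τE + g1 x (φ x))) (1/τE)) := by
    constructor
    · show (0:ℝ) * (τE + g1 0 (φ 0)) ≤ 1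
      simp
    · exact hub
  obtain ⟨x0, hx0mem, hx0eq⟩ := intermediate_value_Icc hτE'.le hGcont h1mem
  have hx0eq' : x0 * (τE + g1 x0 (φ x0)) = 1 := hx0eq
  have hx0pos : 0 < x0 := by nlinarith [pos1 x0 (φ x0), hx0mem.1]
  have hx0lt : x0 < 1/τE := by
    rw [lt_div_iff₀ hτEpos]
    nlinarith [mul_pos hx0pos (pos1 x0 (φ x0))]
  have hx0Icc : x0 ∈ Icc (0:ℝ) 1 := hsub hx0mem
  refine ⟨(x0, φ x0), ⟨⟨hx0pos, hx0lt⟩, hφIoo x0 hx0Icc, hx0eq', hφeq x0 hx0Icc⟩, ?_⟩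
  rintro ⟨y1, y2⟩ ⟨hy1, hy2, he1, he2⟩
  simp only at he1 he2 hy1 hy2
  have hy1Icc : y1 ∈ Icc (0:ℝ) 1 := ⟨hy1.1.le, le_trans hy1.2.le hτEle1⟩
  have hy2Icc : y2 ∈ Icc (0:ℝ) (1/τI) := ⟨hy2.1.le, hy2.2.le⟩
  have hφx0Icc : φ x0 ∈ Icc (0:ℝ) (1/τI) := hφmem x0 hx0Icc
  have hd2' : |y2 - φ x0| ≤ Cφ * |y1 - x0| :=
    hrootlip y1 hy1Icc x0 hx0Icc y2 (φ x0) hy2Icc hφx0Icc he2 (hφeq x0 hx0Icc)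
  have hB := lip1 y1 hy1Icc x0 hx0Icc y2 hy2Icc (φ x0) hφx0Icc
  have hBA : |g1 y1 y2 - g1 x0 (φ x0)| ≤ A * |y1 - x0| := by
    calc |g1 y1 y2 - g1 x0 (φ x0)| ≤ c1 * |y1 - x0| + d1 * |y2 - φ x0| := hB
      _ ≤ c1 * |y1 - x0| + d1 * (Cφ * |y1 - x0|) :=
          add_le_add le_rfl (mul_le_mul_of_nonneg_left hd2' hd1)
      _ = A * |y1 - x0| := by rw [hAdef]; ring
  have hp1 : 0 < τE + g1 y1 y2 := by nlinarith [pos1 y1 y2]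
  have hp2 : 0 < τE + g1 x0 (φ x0) := by nlinarith [pos1 x0 (φ x0)]
  have e : (y1 - x0) * ((τE + g1 y1 y2) * (τE + g1 x0 (φ x0)))
      = g1 x0 (φ x0) - g1 y1 y2 := by
    linear_combination (τE + g1 x0 (φ x0)) * he1 - (τE + g1 y1 y2) * hx0eq'
  have e2 : |y1 - x0| * ((τE + g1 y1 y2) * (τE + g1 x0 (φ x0)))
      = |g1 y1 y2 - g1 x0 (φ x0)| := by
    rw [← abs_of_pos (mul_pos hp1 hp2), ← abs_mul, e, abs_sub_comm]
  have hprod : τE * τE ≤ (τE + g1 y1 y2) * (τE + g1 x0 (φ x0)) := by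
    nlinarith [mul_pos hτEpos (pos1 y1 y2), mul_pos hτEpos (pos1 x0 (φ x0)),
      mul_pos (pos1 y1 y2) (pos1 x0 (φ x0))]
  have hkey : τE * τE * |y1 - x0| ≤ |g1 y1 y2 - g1 x0 (φ x0)| := by
    rw [← e2]
    nlinarith [abs_nonneg (y1 - x0)]
  have h1e : y1 = x0 := by
    by_contra hne
    have habs0 : 0 < |y1 - x0| := abs_pos.2 (sub_ne_zero.2 hne)
    have hAτ : A < τE * τE := by nlinarith
    nlinarith
  have h2e : y2 = φ x0 := by
    rw [h1e] at hd2'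
    simp only [sub_self, abs_zero, mul_zero] at hd2'
    exact sub_eq_zero.1 (abs_nonpos_iff.1 hd2')
  rw [Prod.mk.injEq]
  exact ⟨h1e, h2e⟩

/- STATEMENT 8: Fix b_E^E, b_I^E, b_E^I, b_I^I > 0, τ_I > 0, a_E, a_I > 0, ν_{E,ext} ≥ 0
and V_R < V_F.  Then there exists T > 0 such that for every excitatory refractory period
τ_E > T, the steady-state system has exactly one solution. -/
set_option maxHeartbeats 1000000 in
theorem unique_steady_state_large_tauE (VR VF bEE bIE bEI bII τI aE aI ν : ℝ)
    (hV : VR < VF) (hbEE : 0 < bEE) (hbIE : 0 < bIE) (hbEI : 0 < bEI) (hbII : 0 < bII)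
    (hτI : 0 < τI) (haE : 0 < aE) (haI : 0 < aI) (hν : 0 ≤ ν) :
    ∃ T > 0, ∀ τE : ℝ, T < τE →
      ∃! p : ℝ × ℝ, p.1 ∈ Set.Ioo 0 (1 / τE) ∧ p.2 ∈ Set.Ioo 0 (1 / τI) ∧
        p.1 * (τE + I1 VR VF bEE bIE aE ν p.1 p.2) = 1 ∧
        p.2 * (τI + I2 VR VF bEE bEI bII aI ν p.1 p.2) = 1 := by
  have hsE : 0 < Real.sqrt aE := Real.sqrt_pos.2 haE
  have hsI : 0 < Real.sqrt aI := Real.sqrt_pos.2 haI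
  have hτI' : (0:ℝ) < 1 / τI := by positivity
  have hcd1 : VR / Real.sqrt aE < VF / Real.sqrt aE := by
    rw [div_eq_mul_inv, div_eq_mul_inv]
    exact mul_lt_mul_of_pos_right hV (by positivity)
  have hcd2 : VR / Real.sqrt aI < VF / Real.sqrt aI := by
    rw [div_eq_mul_inv, div_eq_mul_inv]
    exact mul_lt_mul_of_pos_right hV (by positivity)
  set M : ℝ := (|VR| + |VF| + bEE + bIE * (1 / τI)) / Real.sqrt aE
      + (|VR| + |VF| + bEI + bII * (1 / τI) + |bEI - bEE| * ν) / Real.sqrt aI with hMdef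
  have hl0 : 0 ≤ LL M := LL_nonneg M
  have hnum1 : 0 ≤ |VR| + |VF| + bEE + bIE * (1 / τI) := by
    have := abs_nonneg VR; have := abs_nonneg VF
    nlinarith [mul_pos hbIE hτI']
  have hnum2 : 0 ≤ |VR| + |VF| + bEI + bII * (1 / τI) + |bEI - bEE| * ν := by
    have := abs_nonneg VR; have := abs_nonneg VF
    nlinarith [mul_pos hbII hτI', mul_nonneg (abs_nonneg (bEI - bEE)) hν]
  have hM1 : 0 ≤ (|VR| + |VF| + bEE + bIE * (1 / τI)) / Real.sqrt aE :=
    div_nonneg hnum1 hsE.le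
  have hM2 : 0 ≤ (|VR| + |VF| + bEI + bII * (1 / τI) + |bEI - bEE| * ν) / Real.sqrt aI :=
    div_nonneg hnum2 hsI.le
  have hVRb : |VR| ≤ |VR| + |VF| := le_add_of_nonneg_right (abs_nonneg VF)
  have hVFb : |VF| ≤ |VR| + |VF| := le_add_of_nonneg_left (abs_nonneg VR)
  -- argument bounds
  have harg1 : ∀ x ∈ Icc (0:ℝ) 1, ∀ t ∈ Icc (0:ℝ) (1/τI), ∀ c : ℝ, |c| ≤ |VR| + |VF| →
      c / Real.sqrt aE - (bEE * x - bIE * t + (bEE - bEE) * ν) / Real.sqrt aE ≤ M := by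
    intro x hx t ht c hc
    have hu : |bEE * x - bIE * t + (bEE - bEE) * ν| ≤ bEE + bIE * (1 / τI) := by
      rw [abs_le]
      constructor
      · nlinarith [mul_nonneg hbEE.le hx.1, mul_le_mul_of_nonneg_left ht.2 hbIE.le]
      · nlinarith [mul_le_mul_of_nonneg_left hx.2 hbEE.le, mul_nonneg hbIE.le ht.1]
    rw [div_sub_div_same]
    calc (c - (bEE * x - bIE * t + (bEE - bEE) * ν)) / Real.sqrt aE
        ≤ (|VR| + |VF| + bEE + bIE * (1 / τI)) / Real.sqrt aE := by
          gcongr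
          linarith [le_abs_self c, (abs_le.1 hu).1]
      _ ≤ M := by rw [hMdef]; linarith
  have harg2 : ∀ x ∈ Icc (0:ℝ) 1, ∀ t ∈ Icc (0:ℝ) (1/τI), ∀ c : ℝ, |c| ≤ |VR| + |VF| →
      c / Real.sqrt aI - (bEI * x - bII * t + (bEI - bEE) * ν) / Real.sqrt aI ≤ M := by
    intro x hx t ht c hc
    have hu : |bEI * x - bII * t + (bEI - bEE) * ν| ≤ bEI + bII * (1 / τI) + |bEI - bEE| * ν := by
      rw [abs_le]
      constructor
      · nlinarith [mul_nonneg hbEI.le hx.1, mul_le_mul_of_nonneg_left ht.2 hbII.le,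
          mul_le_mul_of_nonneg_right (neg_abs_le (bEI - bEE)) hν]
      · nlinarith [mul_le_mul_of_nonneg_left hx.2 hbEI.le, mul_nonneg hbII.le ht.1,
          mul_le_mul_of_nonneg_right (le_abs_self (bEI - bEE)) hν]
    rw [div_sub_div_same]
    calc (c - (bEI * x - bII * t + (bEI - bEE) * ν)) / Real.sqrt aI
        ≤ (|VR| + |VF| + bEI + bII * (1 / τI) + |bEI - bEE| * ν) / Real.sqrt aI := by
          gcongr
          linarith [le_abs_self c, (abs_le.1 hu).1]
      _ ≤ M := by rw [hMdef]; linarith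
  -- constants
  set c1 : ℝ := 2 * LL M * bEE / Real.sqrt aE with hc1def
  set d1 : ℝ := 2 * LL M * bIE / Real.sqrt aE with hd1def
  set c2 : ℝ := 2 * LL M * bEI / Real.sqrt aI with hc2def
  set d2 : ℝ := 2 * LL M * bII / Real.sqrt aI with hd2def
  have hc1nn : 0 ≤ c1 := div_nonneg (mul_nonneg (by linarith) hbEE.le) hsE.le
  have hd1nn : 0 ≤ d1 := div_nonneg (mul_nonneg (by linarith) hbIE.le) hsE.le
  have hc2nn : 0 ≤ c2 := div_nonneg (mul_nonneg (by linarith) hbEI.le) hsI.le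
  have hd2nn : 0 ≤ d2 := div_nonneg (mul_nonneg (by linarith) hbII.le) hsI.le
  -- positivity
  have pos1 : ∀ x t : ℝ, 0 < I1 VR VF bEE bIE aE ν x t := by
    intro x t; rw [I1_eq]; exact Kv_pos hcd1 _
  have pos2 : ∀ x t : ℝ, 0 < I2 VR VF bEE bEI bII aI ν x t := by
    intro x t; rw [I2_eq]; exact Kv_pos hcd2 _
  -- monotonicity of I2 in t
  have mono2 : ∀ x s t : ℝ, s ≤ t →
      I2 VR VF bEE bEI bII aI ν x s ≤ I2 VR VF bEE bEI bII aI ν x t := by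
    intro x s t hst
    rw [I2_eq, I2_eq]
    apply Kv_anti hcd2.le
    gcongr
  -- Lipschitz bounds
  have lip1 : ∀ x ∈ Icc (0:ℝ) 1, ∀ x' ∈ Icc (0:ℝ) 1, ∀ t ∈ Icc (0:ℝ) (1/τI),
      ∀ t' ∈ Icc (0:ℝ) (1/τI),
      |I1 VR VF bEE bIE aE ν x t - I1 VR VF bEE bIE aE ν x' t'|
        ≤ c1 * |x - x'| + d1 * |t - t'| := by
    intro x hx x' hx' t ht t' ht'
    rw [I1_eq, I1_eq]
    refine le_trans (Kv_lip (M := M) (harg1 x hx t ht VR hVRb) (harg1 x hx t ht VF hVFb)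
      (harg1 x' hx' t' ht' VR hVRb) (harg1 x' hx' t' ht' VF hVFb)) ?_
    have e : (bEE * x - bIE * t + (bEE - bEE) * ν) - (bEE * x' - bIE * t' + (bEE - bEE) * ν)
        = bEE * (x - x') - bIE * (t - t') := by ring
    have hdv : |(bEE * x - bIE * t + (bEE - bEE) * ν) / Real.sqrt aE
        - (bEE * x' - bIE * t' + (bEE - bEE) * ν) / Real.sqrt aE|
        ≤ (bEE * |x - x'| + bIE * |t - t'|) / Real.sqrt aE := by
      rw [div_sub_div_same, e, abs_div, abs_of_pos hsE]
      gcongr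
      calc |bEE * (x - x') - bIE * (t - t')| ≤ |bEE * (x - x')| + |bIE * (t - t')| :=
            abs_sub _ _
        _ = bEE * |x - x'| + bIE * |t - t'| := by
            rw [abs_mul, abs_mul, abs_of_pos hbEE, abs_of_pos hbIE]
    calc LL M * (2 * |(bEE * x - bIE * t + (bEE - bEE) * ν) / Real.sqrt aE
          - (bEE * x' - bIE * t' + (bEE - bEE) * ν) / Real.sqrt aE|)
        ≤ LL M * (2 * ((bEE * |x - x'| + bIE * |t - t'|) / Real.sqrt aE)) := by
          apply mul_le_mul_of_nonneg_left (by linarith) hl0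
      _ = c1 * |x - x'| + d1 * |t - t'| := by
          rw [hc1def, hd1def]; field_simp
  have lip2 : ∀ x ∈ Icc (0:ℝ) 1, ∀ x' ∈ Icc (0:ℝ) 1, ∀ t ∈ Icc (0:ℝ) (1/τI),
      ∀ t' ∈ Icc (0:ℝ) (1/τI),
      |I2 VR VF bEE bEI bII aI ν x t - I2 VR VF bEE bEI bII aI ν x' t'|
        ≤ c2 * |x - x'| + d2 * |t - t'| := by
    intro x hx x' hx' t ht t' ht'
    rw [I2_eq, I2_eq]
    refine le_trans (Kv_lip (M := M) (harg2 x hx t ht VR hVRb) (harg2 x hx t ht VF hVFb)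
      (harg2 x' hx' t' ht' VR hVRb) (harg2 x' hx' t' ht' VF hVFb)) ?_
    have e : (bEI * x - bII * t + (bEI - bEE) * ν) - (bEI * x' - bII * t' + (bEI - bEE) * ν)
        = bEI * (x - x') - bII * (t - t') := by ring
    have hdv : |(bEI * x - bII * t + (bEI - bEE) * ν) / Real.sqrt aI
        - (bEI * x' - bII * t' + (bEI - bEE) * ν) / Real.sqrt aI|
        ≤ (bEI * |x - x'| + bII * |t - t'|) / Real.sqrt aI := by
      rw [div_sub_div_same, e, abs_div, abs_of_pos hsI]
      gcongr
      calc |bEI * (x - x') - bII * (t - t')| ≤ |bEI * (x - x')| + |bII * (t - t')| :=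
            abs_sub _ _
        _ = bEI * |x - x'| + bII * |t - t'| := by
            rw [abs_mul, abs_mul, abs_of_pos hbEI, abs_of_pos hbII]
    calc LL M * (2 * |(bEI * x - bII * t + (bEI - bEE) * ν) / Real.sqrt aI
          - (bEI * x' - bII * t' + (bEI - bEE) * ν) / Real.sqrt aI|)
        ≤ LL M * (2 * ((bEI * |x - x'| + bII * |t - t'|) / Real.sqrt aI)) := by
          apply mul_le_mul_of_nonneg_left (by linarith) hl0
      _ = c2 * |x - x'| + d2 * |t - t'| := by
          rw [hc2def, hd2def]; field_simp
  exact abstract_unique τI c1 d1 c2 d2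
    (fun x t => I1 VR VF bEE bIE aE ν x t) (fun x t => I2 VR VF bEE bEI bII aI ν x t)
    hτI hc1nn hd1nn hc2nn hd2nn pos1 pos2 mono2 lip1 lip2
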